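/- Pointwise small-θ behavior of the scaled 1-level density: the function L(θ) = (π²/2)·θ·(J_{n-3/2}(θπ)² + J_{n-1/2}(θπ)² - ((2n-1)/(θπ)) J_{n-1/2}(θπ) J_{n-3/2}(θπ)) satisfies L(θ) ~ c_n θ^{2n} as θ → 0⁺ for some constant c_n > 0 depending only on n, for every integer n ≥ 1. -/

import Mathlib

open Filter

/-- The Bessel function of the first kind `J_ν(x)`, defined by its power series
`J_ν(x) = ∑_{k≥0} (-1)^k / (k! Γ(ν+k+1)) (x/2)^{2k+ν}` (real powers). -/
noncomputable def besselJ (ν x : ℝ) : ℝ :=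
  ∑' k : ℕ, ((-1) ^ k / ((k.factorial : ℝ) * Real.Gamma (ν + (k : ℝ) + 1))) *
    (x / 2) ^ (2 * (k : ℝ) + ν)

/-- Series coefficient of the Bessel function. -/
noncomputable def bc (ν : ℝ) (k : ℕ) : ℝ :=
  (-1) ^ k / ((k.factorial : ℝ) * Real.Gamma (ν + (k : ℝ) + 1))

/-- The entire part of the Bessel function, as a function of `t = (x/2)^2`. -/
noncomputable def bg (ν t : ℝ) : ℝ := ∑' k : ℕ, bc ν k * t ^ k

/-- The tail `(g(t) - g(0))/t` of the entire part. -/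
noncomputable def br (ν t : ℝ) : ℝ := ∑' k : ℕ, bc ν (k + 1) * t ^ k

lemma gamma_arg_pos {ν : ℝ} (hν : -1 < ν) (k : ℕ) : 0 < ν + (k : ℝ) + 1 := by
  have : (0:ℝ) ≤ k := Nat.cast_nonneg k
  linarith

lemma bc_abs {ν : ℝ} (hν : -1 < ν) (k : ℕ) :
    |bc ν k| = 1 / ((k.factorial : ℝ) * Real.Gamma (ν + (k : ℝ) + 1)) := by
  have hΓ : 0 < Real.Gamma (ν + (k : ℝ) + 1) := Real.Gamma_pos_of_pos (gamma_arg_pos hν k)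
  have hf : (0:ℝ) < (k.factorial : ℝ) := by positivity
  rw [bc, abs_div, abs_pow, abs_neg, abs_one, one_pow, abs_of_pos (by positivity)]

lemma bc_succ_abs {ν : ℝ} (hν : -1 < ν) (k : ℕ) :
    |bc ν (k + 1)| = |bc ν k| / (((k:ℝ) + 1) * (ν + (k:ℝ) + 1)) := by
  rw [bc_abs hν, bc_abs hν]
  have h1 : ν + ((k:ℕ)+1 : ℕ) + 1 = (ν + (k:ℝ) + 1) + 1 := by push_cast; ring
  rw [h1, Real.Gamma_add_one (ne_of_gt (gamma_arg_pos hν k))]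
  rw [Nat.factorial_succ]
  have hΓ : 0 < Real.Gamma (ν + (k : ℝ) + 1) := Real.Gamma_pos_of_pos (gamma_arg_pos hν k)
  have hf : (0:ℝ) < (k.factorial : ℝ) := by positivity
  have hk : (0:ℝ) < (k:ℝ) + 1 := by positivity
  have hν' : 0 < ν + (k:ℝ) + 1 := gamma_arg_pos hν k
  push_cast
  field_simp

lemma summable_abs_bc {ν : ℝ} (hν : -1 < ν) : Summable (fun k => |bc ν k|) := by
  apply summable_of_ratio_norm_eventually_le (r := 1/2) (by norm_num)
  filter_upwards [eventually_ge_atTop 1] with k hk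
  rw [Real.norm_eq_abs, Real.norm_eq_abs, abs_abs, abs_abs, bc_succ_abs hν]
  have h2 : (2:ℝ) ≤ ((k:ℝ) + 1) * (ν + (k:ℝ) + 1) := by
    have hk1 : (1:ℝ) ≤ (k:ℝ) := by exact_mod_cast hk
    nlinarith
  rw [div_le_iff₀ (by linarith)]
  have : 0 ≤ |bc ν k| := abs_nonneg _
  nlinarith

lemma summable_bc_pow {ν t : ℝ} (hν : -1 < ν) (ht : |t| ≤ 1) :
    Summable (fun k => bc ν k * t ^ k) := by
  apply Summable.of_norm_bounded (summable_abs_bc hν)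
  intro k
  rw [Real.norm_eq_abs, abs_mul, abs_pow]
  have : |t| ^ k ≤ 1 ^ k := pow_le_pow_left₀ (abs_nonneg t) ht k
  calc |bc ν k| * |t| ^ k ≤ |bc ν k| * 1 ^ k := by
        exact mul_le_mul_of_nonneg_left this (abs_nonneg _)
    _ = |bc ν k| := by simp

lemma summable_abs_bc_succ {ν : ℝ} (hν : -1 < ν) : Summable (fun k => |bc ν (k + 1)|) := by
  simpa using ((summable_nat_add_iff (f := fun k => |bc ν k|) 1).2 (summable_abs_bc hν))

lemma tendsto_br {ν : ℝ} (hν : -1 < ν) :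
    Tendsto (br ν) (nhds 0) (nhds (bc ν 1)) := by
  have : Tendsto (br ν) (nhds 0) (nhds (∑' k : ℕ, bc ν (k+1) * (0:ℝ) ^ k)) := by
    apply tendsto_tsum_of_dominated_convergence (bound := fun k => |bc ν (k+1)|)
      (summable_abs_bc_succ hν)
    · intro k
      exact (continuous_const.mul (continuous_pow k)).tendsto 0
    · filter_upwards [eventually_abs_sub_lt (0:ℝ) one_pos] with t ht k
      rw [sub_zero] at ht
      rw [Real.norm_eq_abs, abs_mul, abs_pow]
      have h2 : |t| ^ k ≤ 1 ^ k := pow_le_pow_left₀ (abs_nonneg t) ht.le k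
      calc |bc ν (k+1)| * |t| ^ k ≤ |bc ν (k+1)| * 1 ^ k :=
            mul_le_mul_of_nonneg_left h2 (abs_nonneg _)
        _ = |bc ν (k+1)| := by simp
  convert this using 2
  rw [tsum_eq_single 0 (by intro k hk; simp [zero_pow hk])]
  simp

lemma bg_split {ν t : ℝ} (hν : -1 < ν) (ht : |t| ≤ 1) :
    bg ν t = bc ν 0 + t * br ν t := by
  rw [bg, Summable.tsum_eq_zero_add (summable_bc_pow hν ht)]
  congr 1
  · simp
  · rw [br, ← tsum_mul_left]
    congr 1; ext k; ring

lemma tendsto_bg {ν : ℝ} (hν : -1 < ν) :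
    Tendsto (bg ν) (nhds 0) (nhds (bc ν 0)) := by
  have h1 : Tendsto (fun t : ℝ => bc ν 0 + t * br ν t) (nhds 0) (nhds (bc ν 0)) := by
    have := (tendsto_id.mul (tendsto_br hν)).const_add (bc ν 0)
    simpa using this
  apply h1.congr'
  filter_upwards [eventually_abs_sub_lt (0:ℝ) one_pos] with t ht
  rw [sub_zero] at ht
  exact (bg_split hν ht.le).symm

lemma besselJ_eq {ν x : ℝ} (hx : 0 < x) :
    besselJ ν x = (x / 2) ^ ν * bg ν ((x / 2) ^ 2) := by
  have hp : (0:ℝ) < x / 2 := by linarith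
  rw [besselJ, bg, ← tsum_mul_left]
  congr 1; ext k
  have h1 : (x / 2 : ℝ) ^ (2 * (k : ℝ) + ν) = (x/2) ^ ν * ((x/2)^2) ^ k := by
    rw [Real.rpow_add hp]
    rw [mul_comm (2:ℝ) (k:ℝ)]
    rw [show ((k:ℝ) * 2) = ((k * 2 : ℕ) : ℝ) by push_cast; ring]
    rw [Real.rpow_natCast, pow_mul, mul_comm]; rw [pow_right_comm]
  rw [h1, bc]; ring

lemma bc_zero (ν : ℝ) : bc ν 0 = 1 / Real.Gamma (ν + 1) := by
  simp [bc]

lemma bc_one (ν : ℝ) : bc ν 1 = -(1 / Real.Gamma (ν + 2)) := by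
  rw [bc]
  norm_num
  rw [show ν + 1 + 1 = ν + 2 by ring, neg_div, one_div]

set_option maxHeartbeats 1000000 in
theorem one_level_density_small_theta (n : ℕ) (hn : 1 ≤ n) :
    ∃ c : ℝ, 0 < c ∧
      Tendsto (fun θ : ℝ =>
        (Real.pi ^ 2 / 2 * θ *
          (besselJ ((n : ℝ) - 3/2) (θ * Real.pi) ^ 2 +
            besselJ ((n : ℝ) - 1/2) (θ * Real.pi) ^ 2 -
            (2 * (n : ℝ) - 1) / (θ * Real.pi) *
              besselJ ((n : ℝ) - 1/2) (θ * Real.pi) *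
              besselJ ((n : ℝ) - 3/2) (θ * Real.pi))) / θ ^ (2 * n))
        (nhdsWithin 0 (Set.Ioi 0)) (nhds c) := by
  have hπ : (0:ℝ) < Real.pi := Real.pi_pos
  set m : ℝ := (n : ℝ) with hm_def
  have hm : (1:ℝ) ≤ m := by rw [hm_def]; exact_mod_cast hn
  have hν1 : (-1:ℝ) < m - 3/2 := by linarith
  have hν2 : (-1:ℝ) < m - 1/2 := by linarith
  -- Gamma values
  set G : ℝ := Real.Gamma (m - 1/2) with hG_def
  have hG : 0 < G := Real.Gamma_pos_of_pos (by linarith)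
  have hg1 : Real.Gamma (m - 3/2 + 1) = G := by rw [hG_def]; congr 1; ring
  have hmhalf : (0:ℝ) < m - 1/2 := by linarith
  have hg2 : Real.Gamma (m - 1/2 + 1) = (m - 1/2) * G := Real.Gamma_add_one hmhalf.ne'
  have hg3 : Real.Gamma (m - 3/2 + 2) = (m - 1/2) * G := by
    rw [show m - 3/2 + 2 = m - 1/2 + 1 by ring, hg2]
  have hg4 : Real.Gamma (m - 1/2 + 2) = (m + 1/2) * ((m - 1/2) * G) := by
    rw [show m - 1/2 + 2 = (m + 1/2) + 1 by ring, Real.Gamma_add_one (by linarith),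
      show m + 1/2 = m - 1/2 + 1 by ring, hg2]
  set a1 : ℝ := bc (m - 3/2) 0 with ha1_def
  set a2 : ℝ := bc (m - 1/2) 0 with ha2_def
  set b1 : ℝ := bc (m - 3/2) 1 with hb1_def
  set b2 : ℝ := bc (m - 1/2) 1 with hb2_def
  have ha1 : a1 = 1 / G := by rw [ha1_def, bc_zero, hg1]
  have ha2 : a2 = 1 / ((m - 1/2) * G) := by rw [ha2_def, bc_zero, hg2]
  have hb1 : b1 = -(1 / ((m - 1/2) * G)) := by rw [hb1_def, bc_one, hg3]
  have hb2 : b2 = -(1 / ((m + 1/2) * ((m - 1/2) * G))) := by rw [hb2_def, bc_one, hg4]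
  have key : a1 = (m - 1/2) * a2 := by
    rw [ha1, ha2]
    rw [mul_one_div, eq_div_iff (mul_pos hmhalf hG).ne']
    field_simp
  set S : ℝ := 2*a1*b1 - (m - 1/2)*(a1*b2 + a2*b1) + 0*(b1^2 - (m - 1/2)*(b1*b2)) + a2^2
    with hS_def
  have hparen : (0:ℝ) < m + 1/2 := by linarith
  have hDpos : (0:ℝ) < (m - 1/2)^2 * (m + 1/2) * G^2 :=
    mul_pos (mul_pos (pow_pos hmhalf 2) hparen) (pow_pos hG 2)
  have hmul : S * ((m - 1/2)^2 * (m + 1/2) * G^2) = 1 := by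
    rw [hS_def, ha1, ha2, hb1, hb2, show m + 1/2 = (m - 1/2) + 1 by ring]
    generalize hxg : m - 1/2 = x at hmhalf ⊢
    have hx1 : (0:ℝ) < x + 1 := by linarith
    field_simp
    ring
  have hSpos : 0 < S := by
    rcases le_or_gt S 0 with h | h
    · exfalso
      have : S * ((m - 1/2)^2 * (m + 1/2) * G^2) ≤ 0 :=
        mul_nonpos_of_nonpos_of_nonneg h hDpos.le
      linarith
    · exact h
  set K : ℝ := Real.pi^2/2 * (Real.pi/2) ^ (2*m - 1 : ℝ) with hK_def
  have hK : 0 < K := by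
    have := Real.rpow_pos_of_pos (show (0:ℝ) < Real.pi/2 by linarith) (2*m - 1)
    positivity
  refine ⟨K * S, mul_pos hK hSpos, ?_⟩
  -- the substitution t(θ) = (θ*π/2)^2
  have ht0 : Tendsto (fun θ : ℝ => (θ * (Real.pi/2))^2) (nhdsWithin 0 (Set.Ioi 0)) (nhds 0) := by
    have hc : Continuous fun θ : ℝ => (θ * (Real.pi/2))^2 := (continuous_id.mul continuous_const).pow 2
    have := hc.tendsto 0
    simp only [zero_mul, ne_eq, OfNat.ofNat_ne_zero, not_false_eq_true, zero_pow] at this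
    exact this.mono_left nhdsWithin_le_nhds
  have hbr1 : Tendsto (fun θ : ℝ => br (m - 3/2) ((θ * (Real.pi/2))^2))
      (nhdsWithin 0 (Set.Ioi 0)) (nhds b1) := (tendsto_br hν1).comp ht0
  have hbr2 : Tendsto (fun θ : ℝ => br (m - 1/2) ((θ * (Real.pi/2))^2))
      (nhdsWithin 0 (Set.Ioi 0)) (nhds b2) := (tendsto_br hν2).comp ht0
  have hbg2 : Tendsto (fun θ : ℝ => bg (m - 1/2) ((θ * (Real.pi/2))^2))
      (nhdsWithin 0 (Set.Ioi 0)) (nhds a2) := (tendsto_bg hν2).comp ht0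
  -- limit of the model function
  have hΦ : Tendsto (fun θ : ℝ => K *
      (2*a1*(br (m - 3/2) ((θ * (Real.pi/2))^2))
        - (m - 1/2)*(a1*(br (m - 1/2) ((θ * (Real.pi/2))^2))
            + a2*(br (m - 3/2) ((θ * (Real.pi/2))^2)))
        + ((θ * (Real.pi/2))^2) * ((br (m - 3/2) ((θ * (Real.pi/2))^2))^2
            - (m - 1/2)*((br (m - 3/2) ((θ * (Real.pi/2))^2))
              * (br (m - 1/2) ((θ * (Real.pi/2))^2))))
        + (bg (m - 1/2) ((θ * (Real.pi/2))^2))^2))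
      (nhdsWithin 0 (Set.Ioi 0)) (nhds (K * S)) := by
    rw [hS_def]
    apply Tendsto.const_mul
    exact ((((hbr1.const_mul (2*a1)).sub
        (((hbr2.const_mul a1).add (hbr1.const_mul a2)).const_mul (m - 1/2))).add
        (ht0.mul ((hbr1.pow 2).sub ((hbr1.mul hbr2).const_mul (m - 1/2))))).add
        (hbg2.pow 2))
  apply hΦ.congr'
  -- eventual equality
  have hmem : Set.Ioo (0:ℝ) (2/Real.pi) ∈ nhdsWithin (0:ℝ) (Set.Ioi 0) :=
    Ioo_mem_nhdsGT_of_mem ⟨le_refl 0, by positivity⟩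
  filter_upwards [hmem] with θ hθmem
  obtain ⟨hθ, hθ2⟩ := hθmem
  set p : ℝ := θ * (Real.pi/2) with hp_def
  have hp : 0 < p := by positivity
  have hplt : p < 1 := by
    rw [hp_def]
    calc θ * (Real.pi/2) < (2/Real.pi) * (Real.pi/2) := by
          apply mul_lt_mul_of_pos_right hθ2; positivity
      _ = 1 := by field_simp
  have hs : |p^2| ≤ 1 := by
    rw [abs_of_nonneg (by positivity)]
    nlinarith
  have hu : (0:ℝ) < θ * Real.pi := by positivity
  have hud : θ * Real.pi / 2 = p := by rw [hp_def]; ring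
  -- rewrite Bessel functions
  rw [besselJ_eq hu, besselJ_eq hu, hud]
  have hνeq : p ^ (m - 1/2 : ℝ) = p ^ (m - 3/2 : ℝ) * p := by
    rw [show (m - 1/2 : ℝ) = (m - 3/2) + 1 by ring, Real.rpow_add hp, Real.rpow_one]
  rw [hνeq]
  -- abstract the opaque subterms
  set r1 := br (m - 3/2) (p^2) with hr1_def
  set r2 := br (m - 1/2) (p^2) with hr2_def
  set g1 := bg (m - 3/2) (p^2) with hg1_def
  set g2 := bg (m - 1/2) (p^2) with hg2_def
  set B := p ^ (m - 3/2 : ℝ) with hB_def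
  set R := (Real.pi/2) ^ (2*m - 1 : ℝ) with hR_def
  set W := θ ^ (2*m - 1 : ℝ) with hW_def
  -- splitting identities
  have hsplit1 := bg_split (t := p^2) hν1 hs
  have hsplit2 := bg_split (t := p^2) hν2 hs
  rw [← ha1_def, ← hr1_def, ← hg1_def] at hsplit1
  rw [← ha2_def, ← hr2_def, ← hg2_def] at hsplit2
  have hpoly : g1^2 - (m - 1/2)*(g2 * g1) =
      p^2 * (2*a1*r1 - (m - 1/2)*(a1*r2 + a2*r1) + p^2 * (r1^2 - (m - 1/2)*(r1*r2))) := by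
    rw [hsplit1, hsplit2]
    linear_combination a1 * key
  -- rpow algebra
  have hBp : B^2 * p^2 = W * R := by
    rw [hB_def, hW_def, hR_def, ← Real.rpow_natCast (p ^ (m - 3/2 : ℝ)) 2,
      ← Real.rpow_mul hp.le, ← Real.rpow_natCast p 2, ← Real.rpow_add hp,
      show ((m - 3/2) * ((2:ℕ):ℝ) + ((2:ℕ):ℝ)) = (2*m - 1 : ℝ) by push_cast; ring,
      hp_def, Real.mul_rpow hθ.le (by positivity)]
  have hθpow : θ * W = θ ^ (2*n : ℕ) := by
    rw [hW_def]
    nth_rewrite 1 [← Real.rpow_one θ]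
    rw [← Real.rpow_add hθ, show (1 + (2*m - 1) : ℝ) = ((2*n : ℕ) : ℝ) by push_cast [hm_def]; ring,
      Real.rpow_natCast]
  have hK' : K = Real.pi^2/2 * R := by rw [hK_def, hR_def]
  -- final algebra
  have hT : (0:ℝ) < θ ^ (2*n) := by positivity
  rw [eq_div_iff hT.ne', show θ * Real.pi = 2*p by rw [hp_def]; ring]
  field_simp [hp.ne']
  linear_combination (4 * (2*a1*r1 - (m - 1/2)*(a1*r2 + a2*r1) + p^2 * (r1^2 - (m - 1/2)*(r1*r2)) + g2^2) * θ ^ (2*n)) * hK' - (2 * Real.pi^2 * R * (2*a1*r1 - (m - 1/2)*(a1*r2 + a2*r1) + p^2 * (r1^2 - (m - 1/2)*(r1*r2)) + g2^2)) * hθpow -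
    (2 * Real.pi^2 * (2*a1*r1 - (m - 1/2)*(a1*r2 + a2*r1) + p^2 * (r1^2 - (m - 1/2)*(r1*r2)) + g2^2) * θ) * hBp - (2 * Real.pi^2 * θ * B^2) * hpoly
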